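/- The cumulative copula Tsallis entropy of the bivariate Fréchet–Hoeffding lower bound copula W(u₁,u₂) = max{u₁+u₂-1, 0} equals (α+4)/(6(α+1)(α+2)), i.e., -∫₀¹∫₀¹ W(u₁,u₂)·(W(u₁,u₂)^(α-1) - 1)/(α-1) du₁ du₂ = (α+4)/(6(α+1)(α+2)) for every α ∈ (0,1) ∪ (1,∞), where the integrand is 0 when W = 0. -/
import Mathlib


open MeasureTheory

lemma max_rpow_eq (α : ℝ) (hα0 : 0 < α) (t : ℝ) :
    max t 0 * ((max t 0) ^ (α - 1) - 1) / (α - 1)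
      = ((max t 0) ^ α - max t 0) / (α - 1) := by
  rcases le_or_gt t 0 with h | h
  · rw [max_eq_right h, Real.zero_rpow (ne_of_gt hα0)]
    simp
  · rw [max_eq_left h.le]
    have ht : t ^ α = t ^ (α - 1) * t := by
      rw [← Real.rpow_add_one (ne_of_gt h)]; ring_nf
    rw [ht]; ring

lemma cont_aux (α : ℝ) (hα0 : 0 ≤ α) :
    Continuous (fun t : ℝ => (max t 0) ^ α) := by
  have h : Continuous (fun t : ℝ => max t 0) := continuous_id.max continuous_const
  exact h.rpow_const (fun x => Or.inr hα0)

lemma inner_int (α : ℝ) (hα0 : 0 < α) (u₁ : ℝ) (hu₁ : u₁ ∈ Set.Icc (0:ℝ) 1) :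
    (∫ u₂ in Set.Icc (0:ℝ) 1,
        max (u₁ + u₂ - 1) 0 * ((max (u₁ + u₂ - 1) 0) ^ (α - 1) - 1) / (α - 1))
      = (u₁ ^ (α + 1) / (α + 1) - u₁ ^ 2 / 2) / (α - 1) := by
  obtain ⟨h0, h1⟩ := hu₁
  rw [MeasureTheory.integral_Icc_eq_integral_Ioc,
      ← intervalIntegral.integral_of_le (by norm_num : (0:ℝ) ≤ 1)]
  have heq : ∀ u₂ : ℝ, max (u₁ + u₂ - 1) 0 * ((max (u₁ + u₂ - 1) 0) ^ (α - 1) - 1) / (α - 1)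
      = ((max (u₁ + u₂ - 1) 0) ^ α - max (u₁ + u₂ - 1) 0) / (α - 1) :=
    fun u₂ => max_rpow_eq α hα0 _
  simp_rw [heq]
  have hc : Continuous (fun u₂ : ℝ =>
      ((max (u₁ + u₂ - 1) 0) ^ α - max (u₁ + u₂ - 1) 0) / (α - 1)) := by
    have hm : Continuous (fun u₂ : ℝ => u₁ + u₂ - 1) := by continuity
    exact (((cont_aux α hα0.le).comp hm).sub
      ((continuous_id.max continuous_const).comp hm)).div_const _
  rw [← intervalIntegral.integral_add_adjacent_intervals (a := (0:ℝ)) (b := 1 - u₁) (c := 1)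
      (hc.intervalIntegrable _ _) (hc.intervalIntegrable _ _)]
  have piece1 : (∫ u₂ in (0:ℝ)..(1 - u₁),
      ((max (u₁ + u₂ - 1) 0) ^ α - max (u₁ + u₂ - 1) 0) / (α - 1)) = 0 := by
    rw [intervalIntegral.integral_congr (g := fun _ => (0:ℝ)) ?_,
        intervalIntegral.integral_zero]
    intro u₂ hu₂
    rw [Set.uIcc_of_le (by linarith)] at hu₂
    have hm : max (u₁ + u₂ - 1) 0 = 0 := max_eq_right (by linarith [hu₂.2])
    simp [hm, Real.zero_rpow (ne_of_gt hα0)]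
  have piece2 : (∫ u₂ in (1 - u₁:ℝ)..1,
      ((max (u₁ + u₂ - 1) 0) ^ α - max (u₁ + u₂ - 1) 0) / (α - 1))
      = ∫ t in (0:ℝ)..u₁, (t ^ α - t) / (α - 1) := by
    have step1 : (∫ u₂ in (1 - u₁:ℝ)..1,
        ((max (u₁ + u₂ - 1) 0) ^ α - max (u₁ + u₂ - 1) 0) / (α - 1))
        = ∫ u₂ in (1 - u₁:ℝ)..1,
          (fun t : ℝ => ((max t 0) ^ α - max t 0) / (α - 1)) (u₂ + (u₁ - 1)) := by
      apply intervalIntegral.integral_congr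
      intro u₂ _
      have h' : u₁ + u₂ - 1 = u₂ + (u₁ - 1) := by ring
      simp only [h']
    rw [step1, intervalIntegral.integral_comp_add_right
        (fun t : ℝ => ((max t 0) ^ α - max t 0) / (α - 1)) (u₁ - 1)]
    have e1 : (1 - u₁) + (u₁ - 1) = 0 := by ring
    have e2 : (1 : ℝ) + (u₁ - 1) = u₁ := by ring
    rw [e1, e2]
    apply intervalIntegral.integral_congr
    intro t ht
    rw [Set.uIcc_of_le h0] at ht
    simp only [max_eq_left ht.1]
  rw [piece1, piece2, zero_add]
  rw [intervalIntegral.integral_div, intervalIntegral.integral_sub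
      (intervalIntegral.intervalIntegrable_rpow' (by linarith : (-1:ℝ) < α))
      (intervalIntegral.intervalIntegrable_id),
      integral_rpow (Or.inl (by linarith : (-1:ℝ) < α)), integral_id]
  rw [Real.zero_rpow (by linarith : α + 1 ≠ 0)]
  ring

/-- CCTE of the bivariate Fréchet–Hoeffding lower bound copula
W(u₁,u₂) = max{u₁+u₂-1,0} equals (α+4)/(6(α+1)(α+2)). -/
theorem ccte_frechet_lower (α : ℝ) (hα : α ∈ Set.Ioo (0:ℝ) 1 ∪ Set.Ioi (1:ℝ)) :
    -∫ u₁ in Set.Icc (0:ℝ) 1, ∫ u₂ in Set.Icc (0:ℝ) 1,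
        max (u₁ + u₂ - 1) 0 * ((max (u₁ + u₂ - 1) 0) ^ (α - 1) - 1) / (α - 1)
      = (α + 4) / (6 * (α + 1) * (α + 2)) := by
  have hα0 : 0 < α := by
    rcases hα with h | h
    · exact h.1
    · exact lt_trans one_pos (Set.mem_Ioi.mp h)
  have hα1 : α - 1 ≠ 0 := by
    rcases hα with h | h
    · have := h.2; intro hne; linarith
    · have := Set.mem_Ioi.mp h; intro hne; linarith
  have hαp1 : α + 1 ≠ 0 := by linarith
  have hαp2 : α + 2 ≠ 0 := by linarith
  rw [MeasureTheory.integral_Icc_eq_integral_Ioc,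
      ← intervalIntegral.integral_of_le (by norm_num : (0:ℝ) ≤ 1)]
  have heqon : Set.EqOn
      (fun u₁ => ∫ u₂ in Set.Icc (0:ℝ) 1,
        max (u₁ + u₂ - 1) 0 * ((max (u₁ + u₂ - 1) 0) ^ (α - 1) - 1) / (α - 1))
      (fun u₁ => (u₁ ^ (α + 1) / (α + 1) - u₁ ^ 2 / 2) / (α - 1)) (Set.uIcc (0:ℝ) 1) := by
    intro u₁ hu₁
    rw [Set.uIcc_of_le (by norm_num : (0:ℝ) ≤ 1)] at hu₁
    exact inner_int α hα0 u₁ hu₁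
  rw [intervalIntegral.integral_congr heqon]
  rw [intervalIntegral.integral_div, intervalIntegral.integral_sub
      ((intervalIntegral.intervalIntegrable_rpow' (by linarith : (-1:ℝ) < α + 1)).div_const _)
      ((intervalIntegral.intervalIntegrable_pow 2).div_const _),
      intervalIntegral.integral_div, intervalIntegral.integral_div,
      integral_rpow (Or.inl (by linarith : (-1:ℝ) < α + 1)),
      integral_pow]
  rw [Real.zero_rpow (by intro hne; linarith : α + 1 + 1 ≠ 0), Real.one_rpow]
  have h11 : α + 1 + 1 = α + 2 := by ring
  rw [h11]
  field_simp
  ring
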